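/- arXiv:1808.06107 — 6 statements merged into one kernel-verified Lean document; each statement's English description precedes it below -/
import Mathlib

section
/- Let x ∈ ℝ^d, and let l : {1,...,K-1} → ℝ≥0 be nonnegative losses. Let S_l, S_r be finite disjoint subsets of indices, and suppose losses are monotone on the left in the sense that l(k') ≤ l(k) whenever k' < k. If for some index k the quantity λ_k = l(k) − ‖x‖²·(l(k) + Σ_{j∈S_l} l(j) − Σ_{j∈S_r} l(j)) / (1 + ‖x‖²·(1 + |S_l| + |S_r|)) is ≤ 0, then for every k' < k the corresponding quantity λ_{k'} = l(k') − ‖x‖²·(l(k') + Σ_{j∈S_l} l(j) − Σ_{j∈S_r} l(j)) / (1 + ‖x‖²·(1 + |S_l| + |S_r|)) is also ≤ 0. -/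
theorem sca_left_correctness
    (d : ℕ) (x : EuclideanSpace ℝ (Fin d)) (l : ℕ → ℝ)
    (hl : ∀ i, 0 ≤ l i)
    (Sl Sr : Finset ℕ) (hdisj : Disjoint Sl Sr)
    (hmono : ∀ k' k : ℕ, k' < k → l k' ≤ l k)
    (k : ℕ)
    (hk : l k - ‖x‖^2 * (l k + ∑ j ∈ Sl, l j - ∑ j ∈ Sr, l j) /
        (1 + ‖x‖^2 * (1 + (Sl.card : ℝ) + (Sr.card : ℝ))) ≤ 0) :
    ∀ k' < k,
      l k' - ‖x‖^2 * (l k' + ∑ j ∈ Sl, l j - ∑ j ∈ Sr, l j) /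
        (1 + ‖x‖^2 * (1 + (Sl.card : ℝ) + (Sr.card : ℝ))) ≤ 0 := by
  intro k' hk'
  set a := ‖x‖^2 with ha
  have ha0 : 0 ≤ a := sq_nonneg _
  set D := 1 + a * (1 + (Sl.card : ℝ) + (Sr.card : ℝ)) with hD
  have hD0 : 0 < D := by positivity
  have hle : l k' ≤ l k := hmono k' k hk'
  -- λ(t) = t - a*(t+C)/D = t*(D-a)/D - a*C/D, and D - a ≥ 1 > 0
  have key : ∀ t s : ℝ, t ≤ s →
      t - a * (t + ∑ j ∈ Sl, l j - ∑ j ∈ Sr, l j) / D ≤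
      s - a * (s + ∑ j ∈ Sl, l j - ∑ j ∈ Sr, l j) / D := by
    intro t s hts
    have hDa : a ≤ D := by nlinarith
    rw [sub_le_sub_iff, add_div' _ _ _ hD0.ne', add_div' _ _ _ hD0.ne',
      div_le_div_iff₀ hD0 hD0]
    nlinarith [mul_nonneg (mul_nonneg hD0.le (sub_nonneg.2 hts)) (sub_nonneg.2 hDa)]
  calc l k' - a * (l k' + ∑ j ∈ Sl, l j - ∑ j ∈ Sr, l j) / D
      ≤ l k - a * (l k + ∑ j ∈ Sl, l j - ∑ j ∈ Sr, l j) / D := key _ _ hle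
    _ ≤ 0 := hk
end

section
/- Let x ∈ ℝ^d with ‖x‖² ≥ 0, let S_l, S_r be disjoint finite index sets, let l_i > 0 for i ∈ S_l ∪ S_r, and define a = (Σ_{i∈S_l} l_i − Σ_{i∈S_r} l_i) / (1 + ‖x‖²·(|S_l| + |S_r|)). Suppose for some index k ∉ S_l the candidate multiplier l_k − ‖x‖²·(l_k + Σ_{i∈S_l} l_i − Σ_{i∈S_r} l_i)/(1 + ‖x‖²·(|S_l| + 1 + |S_r|)) ≤ 0 with l_k ≥ 0. Then l_k ≤ a·‖x‖². -/
theorem excluded_index_loss_le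
    (d : ℕ) (x : EuclideanSpace ℝ (Fin d))
    {ι : Type*} [DecidableEq ι] (Sl Sr : Finset ι) (hdisj : Disjoint Sl Sr)
    (l : ι → ℝ) (hlpos : ∀ i ∈ Sl ∪ Sr, 0 < l i)
    (a : ℝ)
    (ha : a = (∑ i ∈ Sl, l i - ∑ i ∈ Sr, l i) /
        (1 + ‖x‖^2 * ((Sl.card : ℝ) + (Sr.card : ℝ))))
    (k : ι) (hk : k ∉ Sl) (lk : ℝ) (hlk : 0 ≤ lk)
    (hcand : lk - ‖x‖^2 * (lk + ∑ i ∈ Sl, l i - ∑ i ∈ Sr, l i) /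
        (1 + ‖x‖^2 * ((Sl.card : ℝ) + 1 + (Sr.card : ℝ))) ≤ 0) :
    lk ≤ a * ‖x‖^2 := by
  set n : ℝ := ‖x‖^2 with hn
  have hn0 : 0 ≤ n := sq_nonneg _
  have hD0 : (0:ℝ) < 1 + n * ((Sl.card : ℝ) + (Sr.card : ℝ)) := by positivity
  have hD1 : (0:ℝ) < 1 + n * ((Sl.card : ℝ) + 1 + (Sr.card : ℝ)) := by positivity
  have h1 : lk * (1 + n * ((Sl.card : ℝ) + 1 + (Sr.card : ℝ)))
      ≤ n * (lk + ∑ i ∈ Sl, l i - ∑ i ∈ Sr, l i) := by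
    have h := sub_nonpos.mp hcand
    rw [le_div_iff₀ hD1] at h
    linarith
  rw [ha, div_mul_eq_mul_div, le_div_iff₀ hD0]
  nlinarith [h1]
end

section
/- Order preservation of thresholds under the PA ranking update: suppose θ_1 ≤ θ_2 ≤ ... ≤ θ_{K−1} are real thresholds, (y_l, y_r) is the label interval with 1 ≤ y_l ≤ y_r ≤ K, losses are l_i = 1 + θ_i − w·x for i < y_l and l_i = 1 + w·x − θ_i for i ≥ y_r, the support sets S_l ⊆ {1,...,y_l−1} and S_r ⊆ {y_r,...,K−1} are the (contiguous) sets produced by the SCA procedure (i.e., S_l = {p,...,y_l−1} and S_r = {y_r,...,q} for some p, q, with the SCA stopping conditions: the candidate multiplier of index p−1 is nonpositive and similarly for q+1), a = (Σ_{i∈S_l} l_i − Σ_{i∈S_r} l_i)/(1 + ‖x‖²(|S_l|+|S_r|)), and the updated thresholds are θ_i' = θ_i − l_i + a‖x‖² for i ∈ S_l, θ_i' = θ_i + l_i + a‖x‖² for i ∈ S_r, and θ_i' = θ_i otherwise. Then θ_1' ≤ θ_2' ≤ ... ≤ θ_{K−1}'. -/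
theorem pa_order_preservation
    (d K : ℕ) (hK : 2 ≤ K)
    (x : EuclideanSpace ℝ (Fin d)) (wx : ℝ)
    (θ θ' l : ℕ → ℝ)
    (yl yr p q : ℕ)
    (hyl : 1 ≤ yl) (hylr : yl ≤ yr) (hyr : yr ≤ K)
    (hmono : ∀ i, 1 ≤ i → i + 1 ≤ K - 1 → θ i ≤ θ (i + 1))
    (hll : ∀ i, 1 ≤ i → i ≤ yl - 1 → l i = 1 + θ i - wx)
    (hlr : ∀ i, yr ≤ i → i ≤ K - 1 → l i = 1 + wx - θ i)
    (Sl Sr : Finset ℕ)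
    (hSl : Sl = Finset.Icc p (yl - 1)) (hSr : Sr = Finset.Icc yr q)
    (hp : 1 ≤ p) (hq : q ≤ K - 1)
    (a : ℝ)
    (ha : a = (∑ i ∈ Sl, l i - ∑ i ∈ Sr, l i) /
        (1 + ‖x‖^2 * ((Sl.card : ℝ) + (Sr.card : ℝ))))
    (hpos_l : ∀ i ∈ Sl, 0 < l i - a * ‖x‖^2)
    (hpos_r : ∀ i ∈ Sr, 0 < l i + a * ‖x‖^2)
    (hstop_l : 1 ≤ p - 1 →
      l (p - 1) - ‖x‖^2 * (l (p - 1) + ∑ i ∈ Sl, l i - ∑ i ∈ Sr, l i) /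
          (1 + ‖x‖^2 * ((Sl.card : ℝ) + 1 + (Sr.card : ℝ))) ≤ 0)
    (hstop_r : q + 1 ≤ K - 1 →
      l (q + 1) + ‖x‖^2 * (∑ i ∈ Sl, l i - l (q + 1) - ∑ i ∈ Sr, l i) /
          (1 + ‖x‖^2 * ((Sl.card : ℝ) + 1 + (Sr.card : ℝ))) ≤ 0)
    (hupd_l : ∀ i ∈ Sl, θ' i = θ i - l i + a * ‖x‖^2)
    (hupd_r : ∀ i ∈ Sr, θ' i = θ i + l i + a * ‖x‖^2)
    (hupd_o : ∀ i, i ∉ Sl → i ∉ Sr → θ' i = θ i) :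
    ∀ i, 1 ≤ i → i + 1 ≤ K - 1 → θ' i ≤ θ' (i + 1) := by
  have hc : (0:ℝ) ≤ ‖x‖^2 := by positivity
  have keyl : 1 ≤ p - 1 → l (p - 1) ≤ a * ‖x‖^2 := by
    intro hp1
    have h := hstop_l hp1
    have hd1 : (0:ℝ) < 1 + ‖x‖^2 * ((Sl.card : ℝ) + 1 + (Sr.card : ℝ)) := by positivity
    have hd2 : (0:ℝ) < 1 + ‖x‖^2 * ((Sl.card : ℝ) + (Sr.card : ℝ)) := by positivity
    rw [sub_nonpos, le_div_iff₀ hd1] at h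
    rw [ha, div_mul_eq_mul_div, le_div_iff₀ hd2]
    nlinarith [h]
  have keyr : q + 1 ≤ K - 1 → l (q + 1) ≤ -(a * ‖x‖^2) := by
    intro hq1
    have h := hstop_r hq1
    have hd1 : (0:ℝ) < 1 + ‖x‖^2 * ((Sl.card : ℝ) + 1 + (Sr.card : ℝ)) := by positivity
    have hd2 : (0:ℝ) < 1 + ‖x‖^2 * ((Sl.card : ℝ) + (Sr.card : ℝ)) := by positivity
    have h3 : ‖x‖^2 * (∑ i ∈ Sl, l i - l (q + 1) - ∑ i ∈ Sr, l i) /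
        (1 + ‖x‖^2 * ((Sl.card : ℝ) + 1 + (Sr.card : ℝ))) ≤ -l (q + 1) := by linarith
    have h4 := (div_le_iff₀ hd1).mp h3
    rw [ha, div_mul_eq_mul_div, ← neg_div, le_div_iff₀ hd2]
    nlinarith [h4]
  subst hSl hSr
  intro i hi1 hiK
  by_cases hSli : i ∈ Finset.Icc p (yl - 1)
  · obtain ⟨hpi, hiyl⟩ := Finset.mem_Icc.mp hSli
    have hli : l i = 1 + θ i - wx := hll i hi1 hiyl
    have hθi : θ' i = θ i - l i + a * ‖x‖^2 := hupd_l i hSli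
    by_cases hSli1 : i + 1 ∈ Finset.Icc p (yl - 1)
    · obtain ⟨hpi1, hi1yl⟩ := Finset.mem_Icc.mp hSli1
      have hli1 : l (i+1) = 1 + θ (i+1) - wx := hll (i+1) (by omega) hi1yl
      have hθi1 : θ' (i+1) = θ (i+1) - l (i+1) + a * ‖x‖^2 := hupd_l (i+1) hSli1
      rw [hθi, hθi1, hli, hli1]; ring_nf; linarith [le_refl (0:ℝ)]
    · have hmo := hmono i hi1 hiK
      have hposi := hpos_l i hSli
      by_cases hSri1 : i + 1 ∈ Finset.Icc yr q
      · have hθi1 : θ' (i+1) = θ (i+1) + l (i+1) + a * ‖x‖^2 := hupd_r (i+1) hSri1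
        have hposi1 := hpos_r (i+1) hSri1
        rw [hθi, hθi1]; linarith
      · have hθi1 : θ' (i+1) = θ (i+1) := hupd_o (i+1) hSli1 hSri1
        rw [hθi, hθi1]; linarith
  · by_cases hSri : i ∈ Finset.Icc yr q
    · obtain ⟨hyri, hiq⟩ := Finset.mem_Icc.mp hSri
      have hli : l i = 1 + wx - θ i := hlr i hyri (by omega)
      have hθi : θ' i = θ i + l i + a * ‖x‖^2 := hupd_r i hSri
      by_cases hSri1 : i + 1 ∈ Finset.Icc yr q
      · obtain ⟨hyri1, hi1q⟩ := Finset.mem_Icc.mp hSri1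
        have hli1 : l (i+1) = 1 + wx - θ (i+1) := hlr (i+1) hyri1 (by omega)
        have hθi1 : θ' (i+1) = θ (i+1) + l (i+1) + a * ‖x‖^2 := hupd_r (i+1) hSri1
        rw [hθi, hθi1, hli, hli1]; ring_nf; linarith [le_refl (0:ℝ)]
      · have hiq' : i = q := by
          simp only [Finset.mem_Icc, not_and, not_le] at hSri1
          omega
        have hSli1 : i + 1 ∉ Finset.Icc p (yl - 1) := by
          simp only [Finset.mem_Icc, not_and, not_le]; omega
        have hθi1 : θ' (i+1) = θ (i+1) := hupd_o (i+1) hSli1 hSri1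
        have hk := keyr (by omega)
        have hli1 : l (q+1) = 1 + wx - θ (q+1) := hlr (q+1) (by omega) (by omega)
        rw [hθi, hθi1, hli, hiq']
        rw [hli1] at hk
        linarith
    · have hθi : θ' i = θ i := hupd_o i hSli hSri
      by_cases hSli1 : i + 1 ∈ Finset.Icc p (yl - 1)
      · obtain ⟨hpi1, hi1yl⟩ := Finset.mem_Icc.mp hSli1
        have hpi : p - 1 = i := by
          simp only [Finset.mem_Icc, not_and, not_le] at hSli
          omega
        have hk := keyl (by omega)
        rw [hpi] at hk
        have hli : l i = 1 + θ i - wx := hll i hi1 (by omega)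
        have hli1 : l (i+1) = 1 + θ (i+1) - wx := hll (i+1) (by omega) hi1yl
        have hθi1 : θ' (i+1) = θ (i+1) - l (i+1) + a * ‖x‖^2 := hupd_l (i+1) hSli1
        rw [hθi, hθi1, hli1]
        rw [hli] at hk
        linarith
      · by_cases hSri1 : i + 1 ∈ Finset.Icc yr q
        · have hθi1 : θ' (i+1) = θ (i+1) + l (i+1) + a * ‖x‖^2 := hupd_r (i+1) hSri1
          have hposi1 := hpos_r (i+1) hSri1
          have hmo := hmono i hi1 hiK
          rw [hθi, hθi1]; linarith
        · have hθi1 : θ' (i+1) = θ (i+1) := hupd_o (i+1) hSli1 hSri1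
          rw [hθi, hθi1]; exact hmono i hi1 hiK
end

section
/- In the PA-I update, if two consecutive left-support indices k, k+1 ∈ S_l have multipliers λ_k = min(C, l_k − a‖x‖²) and λ_{k+1} = min(C, l_{k+1} − a‖x‖²), where l_k = 1 + θ_k − w·x and l_{k+1} = 1 + θ_{k+1} − w·x with θ_k ≤ θ_{k+1} (so l_k ≤ l_{k+1}), then the updated thresholds θ_k' = θ_k − λ_k and θ_{k+1}' = θ_{k+1} − λ_{k+1} satisfy θ_k' ≤ θ_{k+1}'. -/
theorem paI_order_consecutive_support
    (d : ℕ) (x : EuclideanSpace ℝ (Fin d))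
    (C a wx θk θk1 lk lk1 lamk lamk1 : ℝ)
    (hC : 0 < C)
    (hθ : θk ≤ θk1)
    (hlk : lk = 1 + θk - wx) (hlk1 : lk1 = 1 + θk1 - wx)
    (hlamk : lamk = min C (lk - a * ‖x‖^2))
    (hlamk1 : lamk1 = min C (lk1 - a * ‖x‖^2))
    (hlamkpos : 0 < lamk) (hlamk1pos : 0 < lamk1) :
    θk - lamk ≤ θk1 - lamk1 := by
  subst hlk hlk1 hlamk hlamk1
  rcases le_total C (1 + θk - wx - a * ‖x‖^2) with h | h <;>
    rcases le_total C (1 + θk1 - wx - a * ‖x‖^2) with h1 | h1 <;>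
    simp [min_eq_left, min_eq_right, h, h1] <;> linarith
end

section
/- Single-trial lower bound on the potential decrease for PA-II: let x ∈ ℝ^d, C > 0, let S_l, S_r be disjoint finite sets with losses l_i ≥ 0 (i ∈ S_l ∪ S_r) and competitor losses l_i* ≥ 0, set α² = 1/(2C), a = (Σ_{S_l} l_i − Σ_{S_r} l_i)/(1 + 1/(2C) + ‖x‖²(|S_l|+|S_r|)), λ_i = (l_i − a‖x‖²)/(1 + 1/(2C)) for i ∈ S_l, μ_i = (l_i + a‖x‖²)/(1 + 1/(2C)) for i ∈ S_r. Then −a²‖x‖² − Σ_{S_l} λ_i² − Σ_{S_r} μ_i² + Σ_{S_l} 2λ_i(l_i − l_i*) + Σ_{S_r} 2μ_i(l_i − l_i*) ≥ (Σ_{i∈S_l∪S_r} l_i²)/(1 + 1/(2C) + ‖x‖²(|S_l|+|S_r|)) − 2C·Σ_{i∈S_l∪S_r} (l_i*)². -/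
theorem paII_aux (Q n h β a D : ℝ) (hβ : 0 < β) (hD : 0 < D) (hDdef : D = β + h*n) :
    -a^2*h + (Q - n*(a^2*h^2))/β - Q/D = h*(n*Q - (a*D)^2)/(β*D) := by
  have hβ' := hβ.ne'
  have hD' := hD.ne'
  field_simp
  rw [hDdef]
  ring

theorem paII_single_trial_bound
    (d : ℕ) (x : EuclideanSpace ℝ (Fin d)) (C : ℝ) (hC : 0 < C)
    {ι : Type*} [DecidableEq ι] (Sl Sr : Finset ι) (hdisj : Disjoint Sl Sr)
    (l lstar : ι → ℝ)
    (hl : ∀ i ∈ Sl ∪ Sr, 0 ≤ l i) (hlstar : ∀ i ∈ Sl ∪ Sr, 0 ≤ lstar i)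
    (a : ℝ)
    (ha : a = (∑ i ∈ Sl, l i - ∑ i ∈ Sr, l i) /
        (1 + 1 / (2 * C) + ‖x‖^2 * ((Sl.card : ℝ) + (Sr.card : ℝ))))
    (lam mu : ι → ℝ)
    (hlam : ∀ i ∈ Sl, lam i = (l i - a * ‖x‖^2) / (1 + 1 / (2 * C)))
    (hmu : ∀ i ∈ Sr, mu i = (l i + a * ‖x‖^2) / (1 + 1 / (2 * C))) :
    (∑ i ∈ Sl ∪ Sr, (l i)^2) / (1 + 1 / (2 * C) + ‖x‖^2 * ((Sl.card : ℝ) + (Sr.card : ℝ)))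
        - 2 * C * ∑ i ∈ Sl ∪ Sr, (lstar i)^2 ≤
      -a^2 * ‖x‖^2 - ∑ i ∈ Sl, (lam i)^2 - ∑ i ∈ Sr, (mu i)^2
        + ∑ i ∈ Sl, 2 * lam i * (l i - lstar i)
        + ∑ i ∈ Sr, 2 * mu i * (l i - lstar i) := by
  have h2C : (0:ℝ) < 2*C := by linarith
  set h : ℝ := ‖x‖^2 with hhdef
  have hh0 : 0 ≤ h := sq_nonneg _
  set β : ℝ := 1 + 1/(2*C) with hβdef
  have hβ : (0:ℝ) < β := by positivity
  set nl : ℝ := (Sl.card : ℝ) with hnl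
  set nr : ℝ := (Sr.card : ℝ) with hnr
  have hnl0 : 0 ≤ nl := Nat.cast_nonneg _
  have hnr0 : 0 ≤ nr := Nat.cast_nonneg _
  have hD : (0:ℝ) < β + h * (nl + nr) := by
    have : 0 ≤ h * (nl + nr) := mul_nonneg hh0 (by linarith)
    linarith
  set D : ℝ := β + h * (nl + nr) with hDdef
  -- sums over union split
  have hsumstar : ∑ i ∈ Sl ∪ Sr, (lstar i)^2
      = ∑ i ∈ Sl, (lstar i)^2 + ∑ i ∈ Sr, (lstar i)^2 := Finset.sum_union hdisj
  have hsumsq : ∑ i ∈ Sl ∪ Sr, (l i)^2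
      = ∑ i ∈ Sl, (l i)^2 + ∑ i ∈ Sr, (l i)^2 := Finset.sum_union hdisj
  -- Step A: replace the lstar cross terms via AM-GM
  have hA : ∀ (g : ι → ℝ) (s : Finset ι),
      ∑ i ∈ s, (2*g i*l i - (g i)^2/(2*C) - 2*C*(lstar i)^2)
        ≤ ∑ i ∈ s, 2 * g i * (l i - lstar i) := by
    intro g s
    apply Finset.sum_le_sum
    intro i hi
    have key : 2*g i*lstar i - 2*C*(lstar i)^2 ≤ (g i)^2/(2*C) := by
      rw [le_div_iff₀ h2C]
      nlinarith [sq_nonneg (g i - 2*C*lstar i)]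
    nlinarith
  -- Step B: closed-form per-set identities
  have hBl : ∑ i ∈ Sl, (2*lam i*l i - β*(lam i)^2)
      = (∑ i ∈ Sl, (l i)^2 - nl*(a^2*h^2))/β := by
    have hc : ∀ i ∈ Sl, 2*lam i*l i - β*(lam i)^2 = ((l i)^2 - a^2*h^2)/β := by
      intro i hi
      rw [hlam i hi]
      field_simp
      ring
    rw [Finset.sum_congr rfl hc, ← Finset.sum_div, Finset.sum_sub_distrib,
      Finset.sum_const, nsmul_eq_mul]
  have hBr : ∑ i ∈ Sr, (2*mu i*l i - β*(mu i)^2)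
      = (∑ i ∈ Sr, (l i)^2 - nr*(a^2*h^2))/β := by
    have hc : ∀ i ∈ Sr, 2*mu i*l i - β*(mu i)^2 = ((l i)^2 - a^2*h^2)/β := by
      intro i hi
      rw [hmu i hi]
      field_simp
      ring
    rw [Finset.sum_congr rfl hc, ← Finset.sum_div, Finset.sum_sub_distrib,
      Finset.sum_const, nsmul_eq_mul]
  have hBsum : ∑ i ∈ Sl, (2*lam i*l i - β*(lam i)^2) + ∑ i ∈ Sr, (2*mu i*l i - β*(mu i)^2)
      = (∑ i ∈ Sl ∪ Sr, (l i)^2 - (nl+nr)*(a^2*h^2))/β := by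
    rw [hBl, hBr, hsumsq]
    field_simp
    ring
  -- split step for combining
  have hsplit : ∀ (g : ι → ℝ) (s : Finset ι),
      ∑ i ∈ s, (2*g i*l i - (g i)^2/(2*C) - 2*C*(lstar i)^2)
      = ∑ i ∈ s, (2*g i*l i - β*(g i)^2) + ∑ i ∈ s, (g i)^2
          - 2*C*∑ i ∈ s, (lstar i)^2 := by
    intro g s
    rw [Finset.mul_sum, ← Finset.sum_add_distrib, ← Finset.sum_sub_distrib]
    apply Finset.sum_congr rfl
    intro i hi
    have hb : β*(g i)^2 = (g i)^2 + (g i)^2/(2*C) := by rw [hβdef]; ring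
    linarith
  -- Cauchy-Schwarz
  have hCS : (∑ i ∈ Sl, l i - ∑ i ∈ Sr, l i)^2
      ≤ (nl+nr) * (∑ i ∈ Sl ∪ Sr, (l i)^2) := by
    have key := Finset.sum_mul_sq_le_sq_mul_sq (Sl ∪ Sr)
      (fun i => if i ∈ Sl then (1:ℝ) else -1) l
    have h1 : ∑ i ∈ Sl ∪ Sr, (if i ∈ Sl then (1:ℝ) else -1) * l i
        = ∑ i ∈ Sl, l i - ∑ i ∈ Sr, l i := by
      rw [Finset.sum_union hdisj]
      have e1 : ∑ i ∈ Sl, (if i ∈ Sl then (1:ℝ) else -1) * l i = ∑ i ∈ Sl, l i :=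
        Finset.sum_congr rfl (fun i hi => by simp [hi])
      have e2 : ∑ i ∈ Sr, (if i ∈ Sl then (1:ℝ) else -1) * l i = -∑ i ∈ Sr, l i := by
        rw [← Finset.sum_neg_distrib]
        exact Finset.sum_congr rfl (fun i hi => by
          simp [Finset.disjoint_right.mp hdisj hi])
      rw [e1, e2]
      ring
    have h2 : ∑ i ∈ Sl ∪ Sr, ((if i ∈ Sl then (1:ℝ) else -1))^2 = nl + nr := by
      have : ∀ i ∈ Sl ∪ Sr, ((if i ∈ Sl then (1:ℝ) else -1))^2 = 1 := by
        intro i _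
        by_cases hi : i ∈ Sl <;> simp [hi]
      rw [Finset.sum_congr rfl this, Finset.sum_const, nsmul_eq_mul, mul_one,
        Finset.card_union_of_disjoint hdisj]
      push_cast
      rfl
    rw [h1, h2] at key
    exact key
  -- final arithmetic inequality
  have haD : a * D = ∑ i ∈ Sl, l i - ∑ i ∈ Sr, l i := by
    rw [ha]
    field_simp
  have hfinal : (∑ i ∈ Sl ∪ Sr, (l i)^2) / D
      ≤ -a^2*h + (∑ i ∈ Sl ∪ Sr, (l i)^2 - (nl+nr)*(a^2*h^2))/β := by
    have hid : -a^2*h + (∑ i ∈ Sl ∪ Sr, (l i)^2 - (nl+nr)*(a^2*h^2))/β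
        - (∑ i ∈ Sl ∪ Sr, (l i)^2) / D
        = h*((nl+nr)*(∑ i ∈ Sl ∪ Sr, (l i)^2) - (a*D)^2)/(β*D) :=
      paII_aux _ _ _ _ _ _ hβ hD hDdef
    have hnn : 0 ≤ h*((nl+nr)*(∑ i ∈ Sl ∪ Sr, (l i)^2) - (a*D)^2)/(β*D) := by
      apply div_nonneg
      · apply mul_nonneg hh0
        rw [haD]
        linarith [hCS]
      · positivity
    linarith [hid ▸ hnn]
  -- assemble
  have hAl := hA lam Sl
  have hAr := hA mu Sr
  rw [hsplit lam Sl] at hAl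
  rw [hsplit mu Sr] at hAr
  clear_value h β nl nr D
  have h1 : (∑ i ∈ Sl ∪ Sr, (l i)^2 - (nl+nr)*(a^2*h^2))/β + ∑ i ∈ Sl, (lam i)^2
        + ∑ i ∈ Sr, (mu i)^2 - 2*C*∑ i ∈ Sl ∪ Sr, (lstar i)^2
      ≤ ∑ i ∈ Sl, 2 * lam i * (l i - lstar i) + ∑ i ∈ Sr, 2 * mu i * (l i - lstar i) := by
    have hsumstar' : 2*C*∑ i ∈ Sl ∪ Sr, (lstar i)^2
        = 2*C*∑ i ∈ Sl, (lstar i)^2 + 2*C*∑ i ∈ Sr, (lstar i)^2 := by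
      rw [hsumstar]; ring
    linarith [hAl, hAr, hBsum, hsumstar']
  linarith [h1, hfinal]
end

section
/- For the ranking classifier h(x) = min{i ∈ {1,...,K} : f(x) − θ_i < 0} with θ_1 ≤ ... ≤ θ_{K−1} and θ_K = +∞: h(x) = y if and only if θ_{y−1} ≤ f(x) < θ_y (with the convention θ_0 = −∞). Moreover, L_IMC(f(x), θ, y_l, y_r) = 0 implies θ_i ≤ f(x) − 1 for all i ≤ y_l − 1 and f(x) ≤ θ_i − 1 for all i ≥ y_r, and hence y_l ≤ h(x) ≤ y_r. -/
/-- The ranking classifier `h(x) = min {i ∈ {1,…,K} : f(x) - θ_i < 0}`, with the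
convention `θ_K = ∞` (so the index `K` always satisfies the condition). -/
theorem ranking_prediction_characterization
    (K : ℕ) (hK : 2 ≤ K)
    (fx : ℝ) (θ : ℕ → ℝ)
    (hmono : ∀ i j, 1 ≤ i → i ≤ j → j ≤ K - 1 → θ i ≤ θ j)
    (yl yr : ℕ) (hyl : 1 ≤ yl) (hylr : yl ≤ yr) (hyr : yr ≤ K)
    (hx : ℕ)
    (hhx : hx = sInf {i : ℕ | 1 ≤ i ∧ (i = K ∨ fx < θ i)}) :
    (∀ y, 1 ≤ y → y ≤ K →
      (hx = y ↔ ((2 ≤ y → θ (y - 1) ≤ fx) ∧ (y ≤ K - 1 → fx < θ y)))) ∧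
    ((∑ i ∈ Finset.Icc 1 (yl - 1), max 0 (1 - fx + θ i))
        + (∑ i ∈ Finset.Icc yr (K - 1), max 0 (1 + fx - θ i)) = 0 →
      (∀ i, 1 ≤ i → i ≤ yl - 1 → θ i ≤ fx - 1) ∧
      (∀ i, yr ≤ i → i ≤ K - 1 → fx + 1 ≤ θ i) ∧
      yl ≤ hx ∧ hx ≤ yr) := by
  subst hhx
  set S : Set ℕ := {i : ℕ | 1 ≤ i ∧ (i = K ∨ fx < θ i)} with hS
  have hKS : K ∈ S := ⟨by omega, Or.inl rfl⟩
  have hne : S.Nonempty := ⟨K, hKS⟩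
  have hmem : sInf S ∈ S := Nat.sInf_mem hne
  have hxleK : sInf S ≤ K := Nat.sInf_le hKS
  have hx1 : 1 ≤ sInf S := hmem.1
  constructor
  · intro y hy1 hyK
    constructor
    · rintro rfl
      constructor
      · intro h2
        by_contra hlt
        push_neg at hlt
        have hmem' : sInf S - 1 ∈ S := ⟨by omega, Or.inr hlt⟩
        have := Nat.sInf_le hmem'
        omega
      · intro hle
        rcases hmem.2 with h | h
        · omega
        · exact h
    · rintro ⟨h1, h2⟩
      have hyS : y ∈ S := by
        rcases Nat.lt_or_ge y K with h | h
        · exact ⟨hy1, Or.inr (h2 (by omega))⟩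
        · exact ⟨hy1, Or.inl (by omega)⟩
      have hle : sInf S ≤ y := Nat.sInf_le hyS
      rcases Nat.lt_or_ge (sInf S) y with hlt | hge
      · exfalso
        rcases hmem.2 with h | h
        · omega
        · have h2y : 2 ≤ y := by omega
          have hm : θ (sInf S) ≤ θ (y - 1) := hmono _ _ hmem.1 (by omega) (by omega)
          have := h1 h2y
          linarith
      · omega
  · intro hsum
    have hAnn : (0:ℝ) ≤ ∑ i ∈ Finset.Icc 1 (yl - 1), max 0 (1 - fx + θ i) :=
      Finset.sum_nonneg fun i _ => le_max_left _ _
    have hBnn : (0:ℝ) ≤ ∑ i ∈ Finset.Icc yr (K - 1), max 0 (1 + fx - θ i) :=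
      Finset.sum_nonneg fun i _ => le_max_left _ _
    have hA0 : ∑ i ∈ Finset.Icc 1 (yl - 1), max 0 (1 - fx + θ i) = 0 := by linarith
    have hB0 : ∑ i ∈ Finset.Icc yr (K - 1), max 0 (1 + fx - θ i) = 0 := by linarith
    have hA := (Finset.sum_eq_zero_iff_of_nonneg (fun i _ => le_max_left _ _)).mp hA0
    have hB := (Finset.sum_eq_zero_iff_of_nonneg (fun i _ => le_max_left _ _)).mp hB0
    have hAle : ∀ i, 1 ≤ i → i ≤ yl - 1 → θ i ≤ fx - 1 := by
      intro i hi1 hi2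
      have := hA i (Finset.mem_Icc.mpr ⟨hi1, hi2⟩)
      have : 1 - fx + θ i ≤ 0 := max_eq_left_iff.mp this
      linarith
    have hBle : ∀ i, yr ≤ i → i ≤ K - 1 → fx + 1 ≤ θ i := by
      intro i hi1 hi2
      have := hB i (Finset.mem_Icc.mpr ⟨hi1, hi2⟩)
      have : 1 + fx - θ i ≤ 0 := max_eq_left_iff.mp this
      linarith
    refine ⟨hAle, hBle, ?_, ?_⟩
    · by_contra hlt
      push_neg at hlt
      rcases hmem.2 with h | h
      · omega
      · have := hAle (sInf S) hmem.1 (by omega)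
        linarith
    · have hyrS : yr ∈ S := by
        rcases Nat.lt_or_ge yr K with h | h
        · exact ⟨by omega, Or.inr (by have := hBle yr le_rfl (by omega); linarith)⟩
        · exact ⟨by omega, Or.inl (by omega)⟩
      exact Nat.sInf_le hyrS
end
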